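/- For the star hopping Hamiltonian H₁ = J ∑_{i=1}^n (|e_X⟩⟨e_i| + |e_i⟩⟨e_X|) on ℂ^{n+1}, the operator norm satisfies ‖H₁‖ = J√n, and the subspace span{e_X, w} with w = (1/√n)∑ e_i is invariant under H₁, on which H₁ acts as J√n · (|e_X⟩⟨w| + |w⟩⟨e_X|). -/

import Mathlib

theorem stmt15 (n : ℕ) (hn : 1 ≤ n) (J : ℝ) (hJ : 0 < J)
    (H : Matrix (Option (Fin n)) (Option (Fin n)) ℂ)
    (hH : ∀ i j, H i j =
      if (i = none ∧ j ≠ none) ∨ (i ≠ none ∧ j = none) then (J : ℂ) else 0)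
    (eX w : EuclideanSpace ℂ (Option (Fin n)))
    (heX : ∀ i, eX i = if i = none then 1 else 0)
    (hw : ∀ i, w i = if i = none then 0 else ((1 / Real.sqrt n : ℝ) : ℂ)) :
    ‖Matrix.toEuclideanCLM (𝕜 := ℂ) H‖ = J * Real.sqrt n ∧
    (∀ v : EuclideanSpace ℂ (Option (Fin n)),
      v ∈ Submodule.span ℂ {eX, w} →
        (Matrix.toEuclideanCLM (𝕜 := ℂ) H) v ∈ Submodule.span ℂ {eX, w}) ∧
    (Matrix.toEuclideanCLM (𝕜 := ℂ) H) eX = ((J * Real.sqrt n : ℝ) : ℂ) • w ∧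
    (Matrix.toEuclideanCLM (𝕜 := ℂ) H) w = ((J * Real.sqrt n : ℝ) : ℂ) • eX := by
  set T := Matrix.toEuclideanCLM (𝕜 := ℂ) H with hT
  have hnpos : (0:ℝ) < n := by exact_mod_cast hn
  have hs : (0:ℝ) < Real.sqrt n := Real.sqrt_pos.mpr hnpos
  have hsq : Real.sqrt n * Real.sqrt n = n := Real.mul_self_sqrt hnpos.le
  have hsC : ((Real.sqrt n : ℝ) : ℂ) ≠ 0 := by exact_mod_cast hs.ne'
  have happ : ∀ v : EuclideanSpace ℂ (Option (Fin n)), ∀ i,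
      T v i = if i = none then (J:ℂ) * ∑ k, v (some k) else (J:ℂ) * v none := by
    intro v i
    have h := congrFun (Matrix.ofLp_toEuclideanCLM H v) i
    have h2 : T v i = ∑ j, H i j * v j := by
      exact h
    rw [h2]
    cases i with
    | none =>
      simp only [if_pos rfl]
      rw [Fintype.sum_option]
      simp [hH, Finset.mul_sum]
    | some k =>
      simp only [reduceCtorEq, if_false]
      rw [Fintype.sum_option]
      simp [hH]
  -- action on eX
  have hTeX : T eX = ((J * Real.sqrt n : ℝ) : ℂ) • w := by
    ext i
    rw [happ]
    cases i with
    | none => simp [heX, hw]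
    | some k =>
      simp only [reduceCtorEq, if_false, heX, hw, PiLp.smul_apply, smul_eq_mul, if_pos rfl]
      push_cast
      field_simp
  have hTw : T w = ((J * Real.sqrt n : ℝ) : ℂ) • eX := by
    ext i
    rw [happ]
    cases i with
    | none =>
      rw [if_pos rfl]
      simp only [hw, heX, PiLp.smul_apply, smul_eq_mul, reduceCtorEq, if_false, if_pos rfl,
        mul_one]
      rw [Finset.sum_const, Finset.card_univ, Fintype.card_fin, nsmul_eq_mul]
      rw [if_pos trivial, mul_one]
      have hnc : (Real.sqrt n : ℂ) * (Real.sqrt n : ℂ) = (n : ℂ) := by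
        have h := congrArg Complex.ofReal hsq
        push_cast at h
        exact h
      push_cast
      rw [← hnc]
      field_simp
    | some k =>
      simp [hw, heX]
  refine ⟨?_, ?_, hTeX, hTw⟩
  · -- norm
    have hub : ‖T‖ ≤ J * Real.sqrt n := by
      apply ContinuousLinearMap.opNorm_le_bound _ (by positivity)
      intro v
      rw [EuclideanSpace.norm_eq, EuclideanSpace.norm_eq]
      have key : ∑ i, ‖T v i‖ ^ 2 ≤ (J * Real.sqrt n)^2 * ∑ i, ‖v i‖ ^ 2 := by
        have hexp : ∑ i, ‖T v i‖ ^ 2 =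
            J^2 * ‖∑ k, v (some k)‖^2 + n * (J^2 * ‖v none‖^2) := by
          rw [Fintype.sum_option]
          simp only [happ, if_pos rfl, reduceCtorEq, if_false]
          rw [Finset.sum_const, Finset.card_univ, Fintype.card_fin]
          simp [norm_mul, mul_pow, abs_of_pos hJ]
        have hcs : ‖∑ k, v (some k)‖^2 ≤ n * ∑ k, ‖v (some k)‖^2 := by
          calc ‖∑ k, v (some k)‖^2 ≤ (∑ k, ‖v (some k)‖)^2 := by
                apply pow_le_pow_left₀ (norm_nonneg _) (norm_sum_le _ _)
            _ ≤ n * ∑ k, ‖v (some k)‖^2 := by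
                have := sq_sum_le_card_mul_sum_sq (s := Finset.univ)
                  (f := fun k : Fin n => ‖v (some k)‖)
                simpa using this
        have h2 : (J * Real.sqrt n)^2 = J^2 * n := by rw [mul_pow, sq (Real.sqrt n), hsq]
        rw [hexp, h2, Fintype.sum_option]
        nlinarith [hcs, sq_nonneg J]
      calc Real.sqrt (∑ i, ‖T v i‖ ^ 2)
          ≤ Real.sqrt ((J * Real.sqrt n)^2 * ∑ i, ‖v i‖ ^ 2) := Real.sqrt_le_sqrt key
        _ = J * Real.sqrt n * Real.sqrt (∑ i, ‖v i‖ ^ 2) := by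
            rw [Real.sqrt_mul (by positivity), Real.sqrt_sq (by positivity)]
    have hlb : J * Real.sqrt n ≤ ‖T‖ := by
      have hweq : ‖w‖ = 1 := by
        rw [EuclideanSpace.norm_eq]
        have : ∑ i, ‖w i‖^2 = 1 := by
          rw [Fintype.sum_option]
          simp only [hw, if_pos rfl, reduceCtorEq, if_false, norm_zero]
          rw [Finset.sum_const, Finset.card_univ, Fintype.card_fin, nsmul_eq_mul]
          rw [Complex.norm_real, Real.norm_eq_abs, abs_of_pos (by positivity)]
          rw [div_pow, one_pow, Real.sq_sqrt hnpos.le]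
          field_simp
          simp
        rw [this, Real.sqrt_one]
      have hxeq : ‖eX‖ = 1 := by
        rw [EuclideanSpace.norm_eq]
        have : ∑ i, ‖eX i‖^2 = 1 := by
          rw [Fintype.sum_option]
          simp [heX]
        rw [this, Real.sqrt_one]
      have h := T.le_opNorm eX
      rw [hTeX, hxeq, mul_one, norm_smul, hweq, mul_one, Complex.norm_real,
        Real.norm_eq_abs, abs_of_pos (by positivity)] at h
      exact h
    linarith
  · intro v hv
    rw [Submodule.mem_span_pair] at hv ⊢
    obtain ⟨a, b, rfl⟩ := hv
    refine ⟨b * ((J * Real.sqrt n : ℝ) : ℂ), a * ((J * Real.sqrt n : ℝ) : ℂ), ?_⟩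
    rw [map_add, map_smul, map_smul, hTeX, hTw]
    module
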